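/- Let R : ℝ² → ℝ be square-integrable, fix t_c > 0, and define for t < t_c the explicit blowup solution ψ(t,x) := (t_c − t)^{−1} · R( x/(t_c − t) ) · exp( i( t/(t_c(t_c − t)) − |x|²/(4(t_c − t)) ) ). Then for every bounded continuous function f : ℝ² → ℝ, lim_{t → t_c⁻} ∫_{ℝ²} |ψ(t,x)|² f(x) dx = ‖R‖_{L²(ℝ²)}² · f(0). In particular (taking f ≡ 1), the L² norm ‖ψ(t,·)‖_{L²} = ‖R‖_{L²} is constant in t, and |ψ(t,·)|² converges in the weak-* sense to the point mass ‖R‖_{L²}² δ₀ as t → t_c⁻. -/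

import Mathlib

open scoped BigOperators
open MeasureTheory

/-- The explicit blowup solution
`ψ(t,x) = (t_c−t)⁻¹ R(x/(t_c−t)) exp(i(t/(t_c(t_c−t)) − |x|²/(4(t_c−t))))`. -/
noncomputable def blowupSol (tc : ℝ) (R : (Fin 2 → ℝ) → ℝ) (t : ℝ) (x : Fin 2 → ℝ) : ℂ :=
  (((tc - t)⁻¹ * R ((tc - t)⁻¹ • x) : ℝ) : ℂ) *
    Complex.exp (Complex.I *
      ((t / (tc * (tc - t)) - (∑ j : Fin 2, (x j) ^ 2) / (4 * (tc - t)) : ℝ) : ℂ))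

lemma blowup_norm_sq (tc : ℝ) (R : (Fin 2 → ℝ) → ℝ) (t : ℝ) (x : Fin 2 → ℝ) :
    ‖blowupSol tc R t x‖ ^ 2 = ((tc - t)⁻¹) ^ 2 * R ((tc - t)⁻¹ • x) ^ 2 := by
  unfold blowupSol
  rw [norm_mul]
  have h1 : ‖Complex.exp (Complex.I *
      ((t / (tc * (tc - t)) - (∑ j : Fin 2, (x j) ^ 2) / (4 * (tc - t)) : ℝ) : ℂ))‖ = 1 := by
    rw [mul_comm, Complex.norm_exp_ofReal_mul_I]
  rw [h1, mul_one, Complex.norm_real]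
  rw [Real.norm_eq_abs, sq_abs, mul_pow]

lemma change_var (R : (Fin 2 → ℝ) → ℝ) {tc t : ℝ} (ht : t < tc) (f : (Fin 2 → ℝ) → ℝ) :
    (∫ x : Fin 2 → ℝ, ‖blowupSol tc R t x‖ ^ 2 * f x)
      = ∫ ξ : Fin 2 → ℝ, R ξ ^ 2 * f ((tc - t) • ξ) := by
  have hpos : 0 < tc - t := by linarith
  have hne : tc - t ≠ 0 := hpos.ne'
  have key : ∀ x : Fin 2 → ℝ, ‖blowupSol tc R t x‖ ^ 2 * f x
      = ((tc - t)⁻¹) ^ 2 * (R ((tc - t)⁻¹ • x) ^ 2 * f ((tc - t) • ((tc - t)⁻¹ • x))) := by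
    intro x
    rw [blowup_norm_sq, smul_inv_smul₀ hne, mul_assoc]
  simp_rw [key]
  rw [integral_const_mul]
  rw [MeasureTheory.Measure.integral_comp_inv_smul_of_nonneg volume
    (fun ξ => R ξ ^ 2 * f ((tc - t) • ξ)) hpos.le]
  have hfr : Module.finrank ℝ (Fin 2 → ℝ) = 2 := by simp
  rw [hfr, smul_eq_mul, ← mul_assoc]
  rw [inv_pow, inv_mul_cancel₀ (pow_ne_zero 2 hne), one_mul]

/-- For square-integrable `R` and `t_c > 0`, the mass `∫|ψ(t,·)|²` of the explicit
blowup solution is constant, equal to `‖R‖_{L²}²`, and `|ψ(t,·)|²` converges in the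
weak-* sense to the point mass `‖R‖_{L²}² δ₀` as `t → t_c⁻`: for every bounded
continuous `f`, `∫ |ψ(t,x)|² f(x) dx → ‖R‖_{L²}² f(0)`. -/
theorem blowup_solution_concentrates (R : (Fin 2 → ℝ) → ℝ)
    (hR : Integrable (fun ξ : Fin 2 → ℝ => (R ξ) ^ 2))
    (tc : ℝ) (htc : 0 < tc) :
    (∀ t < tc, (∫ x : Fin 2 → ℝ, ‖blowupSol tc R t x‖ ^ 2) = ∫ ξ : Fin 2 → ℝ, (R ξ) ^ 2) ∧
    (∀ f : (Fin 2 → ℝ) → ℝ, Continuous f → (∃ K : ℝ, ∀ x, |f x| ≤ K) →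
      Filter.Tendsto (fun t => ∫ x : Fin 2 → ℝ, ‖blowupSol tc R t x‖ ^ 2 * f x)
        (nhdsWithin tc (Set.Iio tc))
        (nhds ((∫ ξ : Fin 2 → ℝ, (R ξ) ^ 2) * f 0))) := by
  constructor
  · intro t ht
    have := change_var R ht (fun _ => 1)
    simpa using this
  · intro f hf ⟨K, hK⟩
    have hK0 : 0 ≤ K := le_trans (abs_nonneg _) (hK 0)
    -- rewrite the function on the filter
    have heq : ∀ᶠ t in nhdsWithin tc (Set.Iio tc),
        (∫ x : Fin 2 → ℝ, ‖blowupSol tc R t x‖ ^ 2 * f x)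
          = ∫ ξ : Fin 2 → ℝ, R ξ ^ 2 * f ((tc - t) • ξ) := by
      filter_upwards [self_mem_nhdsWithin] with t ht
      exact change_var R ht f
    rw [Filter.tendsto_congr' heq]
    have hlim : ((∫ ξ : Fin 2 → ℝ, (R ξ) ^ 2) * f 0)
        = ∫ ξ : Fin 2 → ℝ, R ξ ^ 2 * f 0 := by rw [integral_mul_const]
    rw [hlim]
    apply MeasureTheory.tendsto_integral_filter_of_dominated_convergence
      (fun ξ => R ξ ^ 2 * K)
    · filter_upwards [self_mem_nhdsWithin] with t ht
      exact (hR.1.mono_measure le_rfl).mul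
        ((hf.comp (continuous_const_smul _)).aestronglyMeasurable)
    · filter_upwards [self_mem_nhdsWithin] with t ht
      filter_upwards with ξ
      rw [norm_mul]
      have : ‖R ξ ^ 2‖ = R ξ ^ 2 := by positivity |> fun h => abs_of_nonneg h
      calc ‖R ξ ^ 2‖ * ‖f ((tc - t) • ξ)‖ ≤ ‖R ξ ^ 2‖ * K := by
            exact mul_le_mul_of_nonneg_left (hK _) (norm_nonneg _)
        _ = R ξ ^ 2 * K := by rw [Real.norm_eq_abs, abs_of_nonneg (by positivity)]
    · exact hR.mul_const K
    · filter_upwards with ξ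
      have h1 : Filter.Tendsto (fun t : ℝ => (tc - t) • ξ) (nhdsWithin tc (Set.Iio tc))
          (nhds (0 : Fin 2 → ℝ)) := by
        have h0 : Filter.Tendsto (fun t : ℝ => tc - t) (nhds tc) (nhds (tc - tc)) :=
          Filter.Tendsto.const_sub tc Filter.tendsto_id
        rw [sub_self] at h0
        have : Filter.Tendsto (fun t : ℝ => tc - t) (nhdsWithin tc (Set.Iio tc)) (nhds 0) :=
          h0.mono_left nhdsWithin_le_nhds
        have := this.smul_const ξ
        simpa using this
      exact (tendsto_const_nhds.mul ((hf.tendsto 0).comp h1))
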